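/- arXiv:2111.02176 — 7 statements merged into one kernel-verified Lean document; each statement's English description precedes it below -/
import Mathlib

section
/- Consider the single-neuron conductance-based model on [0,∞): c·v̇(t) = −μ_L(v(t)−ν_L) − Σ_{ion∈ℐ} μ_ion · m_ion(t)^{p_ion} · h_ion(t)^{q_ion} · (v(t)−ν_ion) + u(t), together with the gating equations τ_{m_ion}(v(t))·ṁ_ion(t) = −m_ion(t) + σ_{m_ion}(v(t)) and τ_{h_ion}(v(t))·ḣ_ion(t) = −h_ion(t) + σ_{h_ion}(v(t)) for each ion ∈ ℐ. Assume |u(t)| ≤ ū for all t ≥ 0, and define v̄ := max{ max_{ion∈ℐ} ν_ion , ū/μ_L + ν_L } and v̲ := min{ min_{ion∈ℐ} ν_ion , −ū/μ_L + ν_L }. If v(0) ∈ [v̲, v̄], m_ion(0) ∈ [0,1] and h_ion(0) ∈ [0,1] for all ion ∈ ℐ, then for every t ≥ 0 and every ion ∈ ℐ one has v(t) ∈ [v̲, v̄], m_ion(t) ∈ [0,1], and h_ion(t) ∈ [0,1]. -/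
open Real Set

private lemma sigmoid_mem_Ioo (y : ℝ) : 1 / (1 + exp y) ∈ Ioo (0:ℝ) 1 := by
  constructor
  · positivity
  · rw [div_lt_one (by positivity)]
    linarith [exp_pos y]

/-- Lemma 1 of the paper: positive invariance of the set
`[v̲, v̄] × [0,1]^ℐ × [0,1]^ℐ` for a single-neuron conductance-based model. -/
theorem conductance_model_invariant_set
    {ι : Type} [Fintype ι] [Nonempty ι]
    -- constants
    (c μL νL ubar : ℝ) (hc : 0 < c) (hμL : 0 < μL)
    (μ ν : ι → ℝ) (p q : ι → ℕ) (hμ : ∀ i, 0 < μ i)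
    -- sigmoid activation functions
    (ρm ρh κm κh : ι → ℝ) (hκm : ∀ i, 0 < κm i) (hκh : ∀ i, κh i < 0)
    (σm σh : ι → ℝ → ℝ)
    (hσm : ∀ i x, σm i x = 1 / (1 + exp (-(x - ρm i) / κm i)))
    (hσh : ∀ i x, σh i x = 1 / (1 + exp (-(x - ρh i) / κh i)))
    -- bell-shaped time-constant functions
    (τmlo τmhi ζm χm τhlo τhhi ζh χh : ι → ℝ)
    (hτm : ∀ i, 0 < τmlo i ∧ τmlo i ≤ τmhi i) (hχm : ∀ i, χm i ≠ 0)
    (hτh : ∀ i, 0 < τhlo i ∧ τhlo i ≤ τhhi i) (hχh : ∀ i, χh i ≠ 0)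
    (τm τh : ι → ℝ → ℝ)
    (hτmdef : ∀ i x, τm i x = τmlo i + (τmhi i - τmlo i) * exp (-(x - ζm i) ^ 2 / (χm i) ^ 2))
    (hτhdef : ∀ i x, τh i x = τhlo i + (τhhi i - τhlo i) * exp (-(x - ζh i) ^ 2 / (χh i) ^ 2))
    -- bounded continuous input
    (u : ℝ → ℝ) (hu_cont : ContinuousOn u (Ici 0)) (hu_bdd : ∀ t ≥ (0:ℝ), |u t| ≤ ubar)
    -- a solution of the ODE system on [0,∞)
    (v : ℝ → ℝ) (m h : ι → ℝ → ℝ) (v' : ℝ → ℝ) (m' h' : ι → ℝ → ℝ)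
    (hv : ∀ t ≥ (0:ℝ), HasDerivAt v (v' t) t)
    (hveq : ∀ t ≥ (0:ℝ), c * v' t =
      -(μL * (v t - νL)) - (∑ i, μ i * (m i t) ^ (p i) * (h i t) ^ (q i) * (v t - ν i)) + u t)
    (hm : ∀ i, ∀ t ≥ (0:ℝ), HasDerivAt (m i) (m' i t) t)
    (hmeq : ∀ i, ∀ t ≥ (0:ℝ), τm i (v t) * m' i t = -(m i t) + σm i (v t))
    (hh : ∀ i, ∀ t ≥ (0:ℝ), HasDerivAt (h i) (h' i t) t)
    (hheq : ∀ i, ∀ t ≥ (0:ℝ), τh i (v t) * h' i t = -(h i t) + σh i (v t))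
    -- the voltage bounds
    (vbar vlow : ℝ)
    (hvbar : vbar = max (⨆ i, ν i) (ubar / μL + νL))
    (hvlow : vlow = min (⨅ i, ν i) (-(ubar / μL) + νL))
    -- initial conditions
    (hv0 : v 0 ∈ Icc vlow vbar)
    (hm0 : ∀ i, m i 0 ∈ Icc (0:ℝ) 1) (hh0 : ∀ i, h i 0 ∈ Icc (0:ℝ) 1) :
    ∀ t ≥ (0:ℝ), ∀ i, v t ∈ Icc vlow vbar ∧ m i t ∈ Icc (0:ℝ) 1 ∧ h i t ∈ Icc (0:ℝ) 1 := by
  -- positivity of time constants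
  have hτmpos : ∀ i x, 0 < τm i x := by
    intro i x
    rw [hτmdef]
    have h1 := (hτm i).1
    have h2 := (hτm i).2
    nlinarith [exp_pos (-(x - ζm i) ^ 2 / (χm i) ^ 2)]
  have hτhpos : ∀ i x, 0 < τh i x := by
    intro i x
    rw [hτhdef]
    have h1 := (hτh i).1
    have h2 := (hτh i).2
    nlinarith [exp_pos (-(x - ζh i) ^ 2 / (χh i) ^ 2)]
  have hσm01 : ∀ i x, σm i x ∈ Ioo (0:ℝ) 1 := fun i x => by
    rw [hσm]; exact sigmoid_mem_Ioo _
  have hσh01 : ∀ i x, σh i x ∈ Ioo (0:ℝ) 1 := fun i x => by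
    rw [hσh]; exact sigmoid_mem_Ioo _
  -- continuity of solutions on [0, t]
  have hvc : ∀ t : ℝ, ContinuousOn v (Icc 0 t) := fun t x hx =>
    ((hv x hx.1).continuousAt).continuousWithinAt
  have hmc : ∀ i, ∀ t : ℝ, ContinuousOn (m i) (Icc 0 t) := fun i t x hx =>
    ((hm i x hx.1).continuousAt).continuousWithinAt
  have hhc : ∀ i, ∀ t : ℝ, ContinuousOn (h i) (Icc 0 t) := fun i t x hx =>
    ((hh i x hx.1).continuousAt).continuousWithinAt
  -- gating variables stay in [0,1]
  have hm01 : ∀ i, ∀ t ≥ (0:ℝ), m i t ∈ Icc (0:ℝ) 1 := by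
    intro i t ht
    constructor
    · have key := image_le_of_deriv_right_lt_deriv_boundary (f := fun s => -(m i s))
        (f' := fun s => -(m' i s)) (a := 0) (b := t) (B := fun _ => 0) (B' := fun _ => 0)
        ((hmc i t).neg) (fun x hx => ((hm i x hx.1).neg).hasDerivWithinAt)
        (by simpa using (hm0 i).1) (fun x => hasDerivAt_const x 0)
        (fun x hx hfx => by
          have hx0 : (0:ℝ) ≤ x := hx.1
          have heq := hmeq i x hx0
          have hm0' : m i x = 0 := by linarith [neg_eq_zero.mp hfx]
          have hσ := (hσm01 i (v x)).1
          have hτ := hτmpos i (v x)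
          rw [hm0'] at heq
          have : 0 < m' i x := by nlinarith
          show -(m' i x) < 0
          linarith)
      have := key (right_mem_Icc.2 ht)
      linarith
    · have key := image_le_of_deriv_right_lt_deriv_boundary (f := m i)
        (f' := m' i) (a := 0) (b := t) (B := fun _ => 1) (B' := fun _ => 0)
        (hmc i t) (fun x hx => (hm i x hx.1).hasDerivWithinAt)
        (hm0 i).2 (fun x => hasDerivAt_const x 1)
        (fun x hx hfx => by
          have hx0 : (0:ℝ) ≤ x := hx.1
          have heq := hmeq i x hx0
          have hσ := (hσm01 i (v x)).2
          have hτ := hτmpos i (v x)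
          have hfx' : m i x = 1 := hfx
          rw [hfx'] at heq
          show m' i x < 0
          nlinarith)
      exact key (right_mem_Icc.2 ht)
  have hh01 : ∀ i, ∀ t ≥ (0:ℝ), h i t ∈ Icc (0:ℝ) 1 := by
    intro i t ht
    constructor
    · have key := image_le_of_deriv_right_lt_deriv_boundary (f := fun s => -(h i s))
        (f' := fun s => -(h' i s)) (a := 0) (b := t) (B := fun _ => 0) (B' := fun _ => 0)
        ((hhc i t).neg) (fun x hx => ((hh i x hx.1).neg).hasDerivWithinAt)
        (by simpa using (hh0 i).1) (fun x => hasDerivAt_const x 0)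
        (fun x hx hfx => by
          have hx0 : (0:ℝ) ≤ x := hx.1
          have heq := hheq i x hx0
          have hh0' : h i x = 0 := by linarith [neg_eq_zero.mp hfx]
          have hσ := (hσh01 i (v x)).1
          have hτ := hτhpos i (v x)
          rw [hh0'] at heq
          have : 0 < h' i x := by nlinarith
          show -(h' i x) < 0
          linarith)
      have := key (right_mem_Icc.2 ht)
      linarith
    · have key := image_le_of_deriv_right_lt_deriv_boundary (f := h i)
        (f' := h' i) (a := 0) (b := t) (B := fun _ => 1) (B' := fun _ => 0)
        (hhc i t) (fun x hx => (hh i x hx.1).hasDerivWithinAt)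
        (hh0 i).2 (fun x => hasDerivAt_const x 1)
        (fun x hx hfx => by
          have hx0 : (0:ℝ) ≤ x := hx.1
          have heq := hheq i x hx0
          have hσ := (hσh01 i (v x)).2
          have hτ := hτhpos i (v x)
          have hfx' : h i x = 1 := hfx
          rw [hfx'] at heq
          show h' i x < 0
          nlinarith)
      exact key (right_mem_Icc.2 ht)
  -- basic facts about vbar / vlow
  have hνle : ∀ i, ν i ≤ vbar := fun i => by
    rw [hvbar]
    exact le_max_of_le_left (le_ciSup (Set.Finite.bddAbove (finite_range ν)) i)
  have hleν : ∀ i, vlow ≤ ν i := fun i => by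
    rw [hvlow]
    exact min_le_of_left_le (ciInf_le (Set.Finite.bddBelow (finite_range ν)) i)
  have hubar1 : ubar ≤ μL * (vbar - νL) := by
    have : ubar / μL + νL ≤ vbar := hvbar ▸ le_max_right _ _
    have h2 : ubar / μL ≤ vbar - νL := by linarith
    calc ubar = μL * (ubar / μL) := by field_simp
    _ ≤ μL * (vbar - νL) := by nlinarith
  have hubar2 : μL * (vlow - νL) ≤ -ubar := by
    have : vlow ≤ -(ubar / μL) + νL := hvlow ▸ min_le_right _ _
    have h2 : vlow - νL ≤ -(ubar / μL) := by linarith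
    have hid : μL * (ubar / μL) = ubar := by field_simp
    nlinarith
  -- nonnegativity of gating products
  have hprod : ∀ i, ∀ x ≥ (0:ℝ), 0 ≤ μ i * (m i x) ^ (p i) * (h i x) ^ (q i) := by
    intro i x hx
    have h1 := (hm01 i x hx).1
    have h2 := (hh01 i x hx).1
    exact mul_nonneg (mul_nonneg (hμ i).le (pow_nonneg h1 _)) (pow_nonneg h2 _)
  -- upper bound for v
  have hv_up : ∀ t ≥ (0:ℝ), v t ≤ vbar := by
    intro t ht
    refine le_of_forall_pos_le_add ?_
    intro ε hε
    have key := image_le_of_deriv_right_lt_deriv_boundary (f := v)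
      (f' := v') (a := 0) (b := t) (B := fun _ => vbar + ε) (B' := fun _ => 0)
      (hvc t) (fun x hx => (hv x hx.1).hasDerivWithinAt)
      (show v 0 ≤ vbar + ε by linarith [hv0.2]) (fun x => hasDerivAt_const x (vbar + ε))
      (fun x hx hfx => by
        have hx0 : (0:ℝ) ≤ x := hx.1
        have heq := hveq x hx0
        have hfx' : v x = vbar + ε := hfx
        have hsum : 0 ≤ ∑ i, μ i * (m i x) ^ (p i) * (h i x) ^ (q i) * (v x - ν i) := by
          refine Finset.sum_nonneg fun i _ => ?_
          have h1 := hprod i x hx0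
          have h2 : 0 ≤ v x - ν i := by
            have := hνle i; rw [hfx']; linarith
          exact mul_nonneg h1 h2
        have hu := (abs_le.1 (hu_bdd x hx0)).2
        rw [hfx'] at heq hsum
        have hlt : c * v' x < 0 := by nlinarith [mul_pos hμL hε]
        show v' x < 0
        by_contra hcon
        push_neg at hcon
        nlinarith)
    exact key (right_mem_Icc.2 ht)
  -- lower bound for v
  have hv_lo : ∀ t ≥ (0:ℝ), vlow ≤ v t := by
    intro t ht
    have : ∀ ε > (0:ℝ), -(v t) ≤ -vlow + ε := by
      intro ε hε
      have key := image_le_of_deriv_right_lt_deriv_boundary (f := fun s => -(v s))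
        (f' := fun s => -(v' s)) (a := 0) (b := t) (B := fun _ => -vlow + ε) (B' := fun _ => 0)
        ((hvc t).neg) (fun x hx => ((hv x hx.1).neg).hasDerivWithinAt)
        (show -(v 0) ≤ -vlow + ε by linarith [hv0.1]) (fun x => hasDerivAt_const x (-vlow + ε))
        (fun x hx hfx => by
          have hx0 : (0:ℝ) ≤ x := hx.1
          have heq := hveq x hx0
          have hvx : v x = vlow - ε := by
            have h3 : -(v x) = -vlow + ε := hfx
            linarith
          have hsum : ∑ i, μ i * (m i x) ^ (p i) * (h i x) ^ (q i) * (v x - ν i) ≤ 0 := by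
            refine Finset.sum_nonpos fun i _ => ?_
            have h1 := hprod i x hx0
            have h2 : v x - ν i ≤ 0 := by
              have := hleν i; rw [hvx]; linarith
            exact mul_nonpos_of_nonneg_of_nonpos h1 h2
          have hu := (abs_le.1 (hu_bdd x hx0)).1
          rw [hvx] at heq hsum
          have hgt : 0 < c * v' x := by nlinarith [mul_pos hμL hε]
          have hpos : 0 < v' x := by
            by_contra hcon
            push_neg at hcon
            nlinarith
          show -(v' x) < 0
          linarith)
      have := key (right_mem_Icc.2 ht)
      linarith [this]
    have h2 : -(v t) ≤ -vlow := le_of_forall_pos_le_add this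
    linarith
  intro t ht i
  exact ⟨⟨hv_lo t ht, hv_up t ht⟩, hm01 i t ht, hh01 i t ht⟩
end

section
/- Let σ(v) = 1/(1+exp(−(v−ρ)/κ)) be a sigmoid and let τ(v) = τ̲ + (τ̄−τ̲)·exp(−(v−ζ)²/χ²) be a bell-shaped time-constant function, so that 0 < τ̲ ≤ τ(v) ≤ τ̄ for all v. Let v : [0,∞) → ℝ be continuous, and let x₁, x₂ : [0,∞) → ℝ be two differentiable solutions of τ(v(t))·ẋ(t) = −x(t) + σ(v(t)). Then |x₁(t) − x₂(t)| ≤ e^{−t/τ̄} · |x₁(0) − x₂(0)| for all t ≥ 0; in particular the gating dynamics is globally exponentially contracting, uniformly in v and in the parameters ρ, κ, ζ, χ. -/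
open Real Set

/-- Lemma 2 of the paper: the gating dynamics
`τ(v(t))·ẋ = −x + σ(v(t))` is globally exponentially contracting with rate `1/τ̄`,
uniformly in `v` and in the parameters `ρ, κ, ζ, χ`. -/
theorem gating_dynamics_contracting
    (ρ κ ζ χ τlo τhi : ℝ) (hκ : κ ≠ 0) (hχ : χ ≠ 0)
    (hτlo : 0 < τlo) (hτle : τlo ≤ τhi)
    (σ τ : ℝ → ℝ)
    (hσ : ∀ x, σ x = 1 / (1 + exp (-(x - ρ) / κ)))
    (hτdef : ∀ x, τ x = τlo + (τhi - τlo) * exp (-(x - ζ) ^ 2 / χ ^ 2))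
    (v : ℝ → ℝ) (hv : ContinuousOn v (Ici 0))
    (x₁ x₂ x₁' x₂' : ℝ → ℝ)
    (hx₁ : ∀ t ≥ (0:ℝ), HasDerivAt x₁ (x₁' t) t)
    (hode₁ : ∀ t ≥ (0:ℝ), τ (v t) * x₁' t = -(x₁ t) + σ (v t))
    (hx₂ : ∀ t ≥ (0:ℝ), HasDerivAt x₂ (x₂' t) t)
    (hode₂ : ∀ t ≥ (0:ℝ), τ (v t) * x₂' t = -(x₂ t) + σ (v t)) :
    ∀ t ≥ (0:ℝ), |x₁ t - x₂ t| ≤ exp (-t / τhi) * |x₁ 0 - x₂ 0| := by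

  have hτpos : ∀ s, 0 < τ s := by
    intro s
    rw [hτdef]
    nlinarith [exp_pos (-(s - ζ) ^ 2 / χ ^ 2)]
  have hτub : ∀ s, τ s ≤ τhi := by
    intro s
    rw [hτdef]
    have h1 : exp (-(s - ζ) ^ 2 / χ ^ 2) ≤ 1 := by
      rw [exp_le_one_iff]
      apply div_nonpos_of_nonpos_of_nonneg (neg_nonpos.mpr (sq_nonneg _)) (sq_nonneg _)
    nlinarith [exp_pos (-(s - ζ) ^ 2 / χ ^ 2)]
  set y : ℝ → ℝ := fun s => x₁ s - x₂ s with hy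
  have hyd : ∀ s ≥ (0:ℝ), HasDerivAt y (-(y s) / τ (v s)) s := by
    intro s hs
    have h := (hx₁ s hs).sub (hx₂ s hs)
    have hne : τ (v s) ≠ 0 := (hτpos (v s)).ne'
    have heq : x₁' s - x₂' s = -(y s) / τ (v s) := by
      have e1 := hode₁ s hs
      have e2 := hode₂ s hs
      field_simp [hy]
      linarith
    rwa [heq] at h
  set g : ℝ → ℝ := fun s => (y s) ^ 2 * exp (2 * s / τhi) with hg
  have hgd : ∀ s ≥ (0:ℝ), HasDerivAt g
      (2 * y s * (-(y s) / τ (v s)) * exp (2 * s / τhi)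
        + (y s) ^ 2 * (exp (2 * s / τhi) * (2 / τhi))) s := by
    intro s hs
    have h1 : HasDerivAt (fun u => (y u) ^ 2) (2 * y s * (-(y s) / τ (v s))) s := by
      have := (hyd s hs).fun_pow 2
      simpa [mul_comm, mul_assoc] using this
    have hlin : HasDerivAt (fun u : ℝ => 2 * u / τhi) (2 / τhi) s := by
      simpa using ((hasDerivAt_id s).const_mul 2).div_const τhi
    have h2 : HasDerivAt (fun u : ℝ => exp (2 * u / τhi)) (exp (2 * s / τhi) * (2 / τhi)) s :=
      hlin.exp
    exact h1.mul h2
  have hcont : ContinuousOn g (Ici 0) := fun s hs =>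
    (hgd s hs).continuousAt.continuousWithinAt
  have hanti : AntitoneOn g (Ici 0) := by
    apply antitoneOn_of_deriv_nonpos (convex_Ici 0) hcont
    · intro s hs
      rw [interior_Ici] at hs
      exact (hgd s hs.le).differentiableAt.differentiableWithinAt
    · intro s hs
      rw [interior_Ici] at hs
      rw [(hgd s hs.le).deriv]
      have hτ2 : τ (v s) ≤ τhi := hτub (v s)
      have hτp : 0 < τ (v s) := hτpos (v s)
      have he : 0 < exp (2 * s / τhi) := exp_pos _
      have ha : (0:ℝ) ≤ 2 * (y s) ^ 2 * exp (2 * s / τhi) := by positivity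
      have hd : 2 * (y s) ^ 2 * exp (2 * s / τhi) / τhi
          ≤ 2 * (y s) ^ 2 * exp (2 * s / τhi) / τ (v s) :=
        div_le_div_of_nonneg_left ha hτp hτ2
      have e1 : 2 * y s * (-(y s) / τ (v s)) * exp (2 * s / τhi)
          = -(2 * (y s) ^ 2 * exp (2 * s / τhi) / τ (v s)) := by ring
      have e2 : (y s) ^ 2 * (exp (2 * s / τhi) * (2 / τhi))
          = 2 * (y s) ^ 2 * exp (2 * s / τhi) / τhi := by ring
      rw [e1, e2]
      linarith
  intro t ht
  have hle : g t ≤ g 0 := hanti (self_mem_Ici) ht ht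
  have hg0 : g 0 = (y 0) ^ 2 := by simp [hg]
  have he : 0 < exp (2 * t / τhi) := exp_pos _
  have h2 : |y t| ^ 2 ≤ (exp (-t / τhi) * |y 0|) ^ 2 := by
    have erw : (exp (-t / τhi)) ^ 2 = (exp (2 * t / τhi))⁻¹ := by
      rw [← Real.exp_nat_mul, ← Real.exp_neg]
      norm_num
      ring_nf
    rw [mul_pow, sq_abs, sq_abs, erw]
    rw [inv_mul_eq_div, le_div_iff₀ he]
    calc (y t) ^ 2 * exp (2 * t / τhi) = g t := rfl
      _ ≤ (y 0) ^ 2 := hg0 ▸ hle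
  have hrhs : 0 ≤ exp (-t / τhi) * |y 0| := by positivity
  have hs := Real.sqrt_le_sqrt h2
  rwa [Real.sqrt_sq (abs_nonneg _), Real.sqrt_sq hrhs] at hs
end

section
/- Let A : ℝ^{n_v} → ℝ^{n_w×n_w} and b : ℝ^{n_v} → ℝ^{n_w} be continuous, and suppose there exist a symmetric positive-definite matrix M_w and λ_w > 0 such that A(v)ᵀ M_w + M_w A(v) ⪯ −λ_w M_w for all v ∈ ℝ^{n_v}. Then for any continuous v : [0,∞) → ℝ^{n_v}, any two differentiable solutions w, ŵ : [0,∞) → ℝ^{n_w} of ẇ(t) = A(v(t))·w(t) + b(v(t)) satisfy ‖ŵ(t) − w(t)‖_{M_w} ≤ e^{−(λ_w/2)·t} · ‖ŵ(0) − w(0)‖_{M_w} for all t ≥ 0. In particular, the copy system ŵ̇ = A(v)ŵ + b(v) is a globally exponentially convergent reduced-order observer: ŵ(t) → w(t) exponentially as t → ∞, for any initial conditions. -/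
open Matrix Real Set

/-- The weighted norm `‖x‖_M = √(xᵀ M x)`. -/
noncomputable def qnorm {ι : Type*} [Fintype ι] (M : Matrix ι ι ℝ) (x : ι → ℝ) : ℝ :=
  Real.sqrt (x ⬝ᵥ M.mulVec x)

/-- if the internal dynamics `ẇ = A(v)w + b(v)` satisfies the matrix
contraction inequality `A(v)ᵀM_w + M_wA(v) ⪯ −λ_w M_w`, then any two solutions (for the
same continuous input `v`) converge to each other exponentially in the `M_w`-weighted norm;
in particular the copy system is a globally exponentially convergent reduced-order observer. -/
theorem reduced_order_observer_convergence
    {nv nw : ℕ}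
    (A : (Fin nv → ℝ) → Matrix (Fin nw) (Fin nw) ℝ)
    (b : (Fin nv → ℝ) → (Fin nw → ℝ))
    (hA : Continuous A) (hb : Continuous b)
    (Mw : Matrix (Fin nw) (Fin nw) ℝ) (hMw : Mw.PosDef)
    (lw : ℝ) (hlw : 0 < lw)
    (hcontr : ∀ v : Fin nv → ℝ,
      (-(lw • Mw) - ((A v)ᵀ * Mw + Mw * A v)).PosSemidef)
    (v : ℝ → Fin nv → ℝ) (hv : ContinuousOn v (Ici 0))
    (w what : ℝ → Fin nw → ℝ)
    (hw : ∀ t ≥ (0:ℝ), HasDerivAt w ((A (v t)).mulVec (w t) + b (v t)) t)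
    (hwhat : ∀ t ≥ (0:ℝ), HasDerivAt what ((A (v t)).mulVec (what t) + b (v t)) t) :
    ∀ t ≥ (0:ℝ), qnorm Mw (what t - w t) ≤ exp (-(lw / 2) * t) * qnorm Mw (what 0 - w 0) := by
  set e : ℝ → Fin nw → ℝ := fun s => what s - w s with he
  -- derivative of the error
  have hede : ∀ s ≥ (0:ℝ), HasDerivAt e ((A (v s)).mulVec (e s)) s := by
    intro s hs
    have h1 := (hwhat s hs).sub (hw s hs)
    have h2 : (A (v s)).mulVec (what s) + b (v s) - ((A (v s)).mulVec (w s) + b (v s))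
        = (A (v s)).mulVec (e s) := by
      simp [he, Matrix.mulVec_sub]
    rw [h2] at h1
    exact h1
  -- the quadratic Lyapunov function
  set V : ℝ → ℝ := fun s => e s ⬝ᵥ Mw.mulVec (e s) with hVdef
  have key : ∀ (B : Matrix (Fin nw) (Fin nw) ℝ) (x : Fin nw → ℝ),
      (B.mulVec x) ⬝ᵥ Mw.mulVec x = x ⬝ᵥ (Bᵀ * Mw).mulVec x := by
    intro B x
    rw [← Matrix.mulVec_mulVec, Matrix.dotProduct_mulVec x, Matrix.vecMul_transpose]
  have hVderiv : ∀ s ≥ (0:ℝ),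
      HasDerivAt V (e s ⬝ᵥ ((A (v s))ᵀ * Mw + Mw * A (v s)).mulVec (e s)) s := by
    intro s hs
    have hcomp : ∀ i, HasDerivAt (fun u => e u i) ((A (v s)).mulVec (e s) i) s := by
      intro i
      exact (hasDerivAt_pi.mp (hede s hs)) i
    have hsum : HasDerivAt (fun u => ∑ i, ∑ j, e u i * Mw i j * e u j)
        (∑ i, ∑ j, ((A (v s)).mulVec (e s) i * Mw i j * e s j
          + e s i * Mw i j * (A (v s)).mulVec (e s) j)) s := by
      apply HasDerivAt.fun_sum
      intro i _
      apply HasDerivAt.fun_sum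
      intro j _
      have := ((hcomp i).mul_const (Mw i j)).fun_mul (hcomp j)
      convert this using 1
    have hVeq : V = fun u => ∑ i, ∑ j, e u i * Mw i j * e u j := by
      funext u
      simp [hVdef, dotProduct, Matrix.mulVec, Finset.mul_sum, mul_assoc]
    have hval : (∑ i, ∑ j, ((A (v s)).mulVec (e s) i * Mw i j * e s j
          + e s i * Mw i j * (A (v s)).mulVec (e s) j))
        = e s ⬝ᵥ ((A (v s))ᵀ * Mw + Mw * A (v s)).mulVec (e s) := by
      have h1 : (∑ i, ∑ j, (A (v s)).mulVec (e s) i * Mw i j * e s j)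
          = ((A (v s)).mulVec (e s)) ⬝ᵥ Mw.mulVec (e s) := by
        simp [dotProduct, Matrix.mulVec, Finset.mul_sum, mul_assoc]
      have h2 : (∑ i, ∑ j, e s i * Mw i j * (A (v s)).mulVec (e s) j)
          = e s ⬝ᵥ Mw.mulVec ((A (v s)).mulVec (e s)) := by
        simp [dotProduct, Matrix.mulVec, Finset.mul_sum, mul_assoc]
      simp only [Finset.sum_add_distrib]
      rw [h1, h2, key, Matrix.mulVec_mulVec, Matrix.add_mulVec, dotProduct_add]
    rw [hVeq, ← hval]
    exact hsum
  -- the contraction bound on the derivative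
  have hbound : ∀ s, e s ⬝ᵥ ((A (v s))ᵀ * Mw + Mw * A (v s)).mulVec (e s) ≤ -lw * V s := by
    intro s
    have := (hcontr (v s)).dotProduct_mulVec_nonneg (e s)
    simp only [Matrix.sub_mulVec, Matrix.neg_mulVec, Matrix.smul_mulVec,
      dotProduct_sub, dotProduct_neg, dotProduct_smul, star_trivial, smul_eq_mul] at this
    simp only [hVdef]
    linarith
  -- g = exp(lw s) * V s is antitone on [0, ∞)
  set g : ℝ → ℝ := fun s => exp (lw * s) * V s with hgdef
  have hgderiv : ∀ s ≥ (0:ℝ), HasDerivAt g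
      (lw * exp (lw * s) * V s
        + exp (lw * s) * (e s ⬝ᵥ ((A (v s))ᵀ * Mw + Mw * A (v s)).mulVec (e s))) s := by
    intro s hs
    have hexp : HasDerivAt (fun u => exp (lw * u)) (lw * exp (lw * s)) s := by
      have := (Real.hasDerivAt_exp (lw * s)).comp s ((hasDerivAt_id s).const_mul lw)
      simpa [mul_comm, Function.comp_def] using this
    exact hexp.mul (hVderiv s hs)
  have hganti : AntitoneOn g (Ici 0) := by
    apply antitoneOn_of_deriv_nonpos (convex_Ici 0)
    · intro s hs
      exact ((hgderiv s hs).continuousAt).continuousWithinAt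
    · intro s hs
      rw [interior_Ici] at hs
      exact ((hgderiv s (le_of_lt hs)).differentiableAt).differentiableWithinAt
    · intro s hs
      rw [interior_Ici] at hs
      rw [(hgderiv s (le_of_lt hs)).deriv]
      have h1 := hbound s
      have h2 : (0:ℝ) < exp (lw * s) := exp_pos _
      nlinarith
  intro t ht
  have hgle : g t ≤ g 0 := hganti (self_mem_Ici) ht ht
  have hV0 : 0 ≤ V 0 := by
    have := hMw.posSemidef.dotProduct_mulVec_nonneg (e 0)
    simpa [hVdef] using this
  have hVt : V t ≤ exp (-lw * t) * V 0 := by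
    have h2 : (0:ℝ) < exp (lw * t) := exp_pos _
    have : exp (lw * t) * V t ≤ V 0 := by simpa [hgdef] using hgle
    rw [neg_mul, Real.exp_neg]
    rw [inv_mul_eq_div, le_div_iff₀ h2]
    linarith [this]
  -- conclude for the square roots
  have hq : qnorm Mw (what t - w t) = Real.sqrt (V t) := rfl
  have hq0 : qnorm Mw (what 0 - w 0) = Real.sqrt (V 0) := rfl
  rw [hq, hq0]
  calc Real.sqrt (V t) ≤ Real.sqrt (exp (-lw * t) * V 0) := Real.sqrt_le_sqrt hVt
    _ = Real.sqrt (exp (-lw * t)) * Real.sqrt (V 0) := Real.sqrt_mul (exp_nonneg _) _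
    _ = exp (-(lw / 2) * t) * Real.sqrt (V 0) := by
        rw [show Real.sqrt (exp (-lw * t)) = exp ((-lw * t) / 2) from by rw [← Real.exp_half]]
        ring_nf
end

section
/- Let γ > 0, α > 0. Let v : [0,∞) → ℝ^{n_v} and u : [0,∞) → ℝ^{n_u} be continuous, and let Φ, a be continuously differentiable (matrix- and vector-valued) functions and A, b continuously differentiable functions defining the internal dynamics. Suppose (v̂, ŵ, θ̂, Ψ, P) solve on [0,∞) the adaptive-observer equations: v̂̇ = Φ(v,ŵ,u)θ̂ + a(v,ŵ,u) + (γI + ΨPΨᵀ)(v−v̂); ŵ̇ = A(v)ŵ + b(v); θ̂̇ = γPΨᵀ(v−v̂); Ψ̇ = −γΨ + γΦ(v,ŵ,u) with Ψ(0) = 0; Ṗ = αP − PΨᵀΨP with P(0) symmetric positive definite. Define the filtered signals ξ and η_f by ξ̇ = −γξ + γv with ξ(0) = v̂(0), and η̇_f = −γη_f + γ·a(v(t),ŵ(t),u(t)) with η_f(0) = 0. Then for all t ≥ 0: γ(v(t) − ξ(t)) − Ψ(t)θ̂(t) − η_f(t) = γ(v(t) − v̂(t)). Consequently, θ̂ satisfies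 the recursive-least-squares update θ̂̇(t) = P(t)Ψ(t)ᵀ·(γ(v(t)−ξ(t)) − Ψ(t)θ̂(t) − η_f(t)). -/
open Matrix Real Set

lemma hasDerivAt_mulVec' {m n : ℕ} {M : ℝ → Matrix (Fin m) (Fin n) ℝ}
    {M' : Matrix (Fin m) (Fin n) ℝ} {x : ℝ → Fin n → ℝ} {x' : Fin n → ℝ} {t : ℝ}
    (hM : ∀ i j, HasDerivAt (fun s => M s i j) (M' i j) t) (hx : HasDerivAt x x' t) :
    HasDerivAt (fun s => (M s).mulVec (x s)) (M'.mulVec (x t) + (M t).mulVec x') t := by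
  rw [hasDerivAt_pi]
  intro i
  have h : ∀ j : Fin n, HasDerivAt (fun s => M s i j * x s j)
      (M' i j * x t j + M t i j * x' j) t :=
    fun j => (hM i j).mul (hasDerivAt_pi.1 hx j)
  have := HasDerivAt.fun_sum (fun j (_ : j ∈ Finset.univ) => h j)
  simpa [Matrix.mulVec, dotProduct, Finset.sum_add_distrib] using this

/-- key identity behind Proposition 3 of the paper: along solutions of
the RLS-based adaptive observer, the filtered regression error equals the injected output
error, `γ(v − Hv) − Ψθ̂ − Ha = γ(v − v̂)`; consequently `θ̂` satisfies the RLS update. -/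
theorem adaptive_observer_rls_identity
    {nv nw nu nθ : ℕ} (γ α : ℝ) (hγ : 0 < γ) (hα : 0 < α)
    -- model functions (continuously differentiable)
    (Φ : (Fin nv → ℝ) → (Fin nw → ℝ) → (Fin nu → ℝ) → Matrix (Fin nv) (Fin nθ) ℝ)
    (a : (Fin nv → ℝ) → (Fin nw → ℝ) → (Fin nu → ℝ) → (Fin nv → ℝ))
    (A : (Fin nv → ℝ) → Matrix (Fin nw) (Fin nw) ℝ)
    (b : (Fin nv → ℝ) → (Fin nw → ℝ))
    (hΦ : ∀ i j, ContDiff ℝ 1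
      (fun p : (Fin nv → ℝ) × (Fin nw → ℝ) × (Fin nu → ℝ) => Φ p.1 p.2.1 p.2.2 i j))
    (ha : ContDiff ℝ 1
      (fun p : (Fin nv → ℝ) × (Fin nw → ℝ) × (Fin nu → ℝ) => a p.1 p.2.1 p.2.2))
    (hA : ∀ i j, ContDiff ℝ 1 (fun v => A v i j))
    (hb : ContDiff ℝ 1 b)
    -- continuous external signals
    (v : ℝ → Fin nv → ℝ) (u : ℝ → Fin nu → ℝ)
    (hv : ContinuousOn v (Ici 0)) (hu : ContinuousOn u (Ici 0))
    -- observer state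
    (vhat : ℝ → Fin nv → ℝ) (what : ℝ → Fin nw → ℝ) (thetah : ℝ → Fin nθ → ℝ)
    (Ψ : ℝ → Matrix (Fin nv) (Fin nθ) ℝ) (P : ℝ → Matrix (Fin nθ) (Fin nθ) ℝ)
    -- the adaptive observer equations
    (hvhat : ∀ t ≥ (0:ℝ), HasDerivAt vhat
      ((Φ (v t) (what t) (u t)).mulVec (thetah t) + a (v t) (what t) (u t)
        + (γ • (v t - vhat t) + (Ψ t * P t * (Ψ t)ᵀ).mulVec (v t - vhat t))) t)
    (hwhat : ∀ t ≥ (0:ℝ), HasDerivAt what ((A (v t)).mulVec (what t) + b (v t)) t)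
    (hthetah : ∀ t ≥ (0:ℝ), HasDerivAt thetah
      (γ • (P t * (Ψ t)ᵀ).mulVec (v t - vhat t)) t)
    (hΨ : ∀ t ≥ (0:ℝ), ∀ i j, HasDerivAt (fun s => Ψ s i j)
      ((-(γ • Ψ t) + γ • Φ (v t) (what t) (u t)) i j) t)
    (hΨ0 : Ψ 0 = 0)
    (hP : ∀ t ≥ (0:ℝ), ∀ i j, HasDerivAt (fun s => P s i j)
      ((α • P t - P t * (Ψ t)ᵀ * Ψ t * P t) i j) t)
    (hP0 : (P 0).PosDef)
    -- the filtered signals ξ = Hv and η_f = Ha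
    (ξ : ℝ → Fin nv → ℝ) (ηf : ℝ → Fin nv → ℝ)
    (hξ : ∀ t ≥ (0:ℝ), HasDerivAt ξ (-(γ • ξ t) + γ • v t) t) (hξ0 : ξ 0 = vhat 0)
    (hηf : ∀ t ≥ (0:ℝ), HasDerivAt ηf (-(γ • ηf t) + γ • a (v t) (what t) (u t)) t)
    (hηf0 : ηf 0 = 0) :
    ∀ t ≥ (0:ℝ),
      γ • (v t - ξ t) - (Ψ t).mulVec (thetah t) - ηf t = γ • (v t - vhat t)
      ∧ HasDerivAt thetah
          ((P t * (Ψ t)ᵀ).mulVec (γ • (v t - ξ t) - (Ψ t).mulVec (thetah t) - ηf t)) t := by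
  set ev : ℝ → Fin nv → ℝ :=
    fun s => γ • (vhat s - ξ s) - (Ψ s).mulVec (thetah s) - ηf s with hev_def
  have hev : ∀ s ≥ (0:ℝ), HasDerivAt ev (-(γ • ev s)) s := by
    intro s hs
    have h1 : HasDerivAt (fun r => γ • (vhat r - ξ r))
        (γ • ((Φ (v s) (what s) (u s)).mulVec (thetah s) + a (v s) (what s) (u s)
        + (γ • (v s - vhat s) + (Ψ s * P s * (Ψ s)ᵀ).mulVec (v s - vhat s))
        - (-(γ • ξ s) + γ • v s))) s := ((hvhat s hs).sub (hξ s hs)).const_smul γ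
    have h2 := hasDerivAt_mulVec' (hΨ s hs) (hthetah s hs)
    have h3 := (h1.sub h2).sub (hηf s hs)
    refine h3.congr_deriv ?_
    simp only [hev_def, Matrix.add_mulVec, Matrix.neg_mulVec, Matrix.smul_mulVec,
      Matrix.mulVec_smul, ← Matrix.mulVec_mulVec, Matrix.mul_assoc,
      smul_sub, smul_add, smul_neg, neg_sub]
    module
  have hev0 : ev 0 = 0 := by
    simp [hev_def, hξ0, hΨ0, hηf0, Matrix.zero_mulVec]
  have key : ∀ t ≥ (0:ℝ), ev t = 0 := by
    intro t ht
    set g : ℝ → Fin nv → ℝ := fun s => Real.exp (γ * s) • ev s with hg_def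
    have hg : ∀ s ≥ (0:ℝ), HasDerivAt g 0 s := by
      intro s hs
      have hc : HasDerivAt (fun r => Real.exp (γ * r)) (Real.exp (γ * s) * γ) s := by
        simpa using ((hasDerivAt_id s).const_mul γ).exp
      have := hc.smul (hev s hs)
      refine this.congr_deriv ?_
      simp [smul_smul]
    have hcont : ContinuousOn g (Icc 0 t) :=
      fun s hs => (hg s hs.1).continuousAt.continuousWithinAt
    have hconst : g t = g 0 := constant_of_has_deriv_right_zero hcont
      (fun y hy => (hg y hy.1).hasDerivWithinAt) t ⟨ht, le_refl _⟩
    have hz : Real.exp (γ * t) • ev t = 0 := by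
      rw [hg_def] at hconst
      simpa [hev0] using hconst
    rcases smul_eq_zero.1 hz with h | h
    · exact absurd h (Real.exp_ne_zero _)
    · exact h
  intro t ht
  have h0 := key t ht
  have heq : γ • (v t - ξ t) - (Ψ t).mulVec (thetah t) - ηf t = γ • (v t - vhat t) := by
    have hlin : γ • (v t - ξ t) - (Ψ t).mulVec (thetah t) - ηf t
        = γ • (v t - vhat t) + ev t := by
      simp only [hev_def]; module
    rw [hlin, h0, add_zero]
  refine ⟨heq, ?_⟩
  rw [heq, Matrix.mulVec_smul]
  exact hthetah t ht
end

section
/- Let α > 0 and let Ψ : [0,∞) → ℝ^{n×m} be continuous such that Ψ(t)ᵀ is persistently exciting with constants T > 0, δ > 0, i.e. ∫_t^{t+T} Ψ(τ)ᵀΨ(τ) dτ ⪰ δI for all t ≥ 0. Let R(0) be symmetric positive definite and define R(t) := e^{−αt}R(0) + ∫₀ᵗ e^{−α(t−τ)} Ψ(τ)ᵀΨ(τ) dτ (the solution of Ṙ = −αR + ΨᵀΨ). Then R(t) is symmetric positive definite for all t ≥ 0, R(t) ⪰ e^{−αt}R(0) for t ∈ [0,T], and R(t) ⪰ δ·e^{−2αT}·I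 for all t ≥ T. -/
open Matrix Real Set

theorem quad_int_aux {m : ℕ} (F : ℝ → Matrix (Fin m) (Fin m) ℝ)
    (hF : ∀ i j, Continuous fun τ => F τ i j) (a b : ℝ) (x : Fin m → ℝ) :
    x ⬝ᵥ ((Matrix.of fun i j => ∫ τ in a..b, F τ i j) *ᵥ x)
      = ∫ τ in a..b, x ⬝ᵥ (F τ *ᵥ x) := by
  have h1 : ∀ i j, x i * ((∫ τ in a..b, F τ i j) * x j)
      = ∫ τ in a..b, x i * (F τ i j * x j) := by
    intro i j
    rw [← intervalIntegral.integral_mul_const, ← intervalIntegral.integral_const_mul]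
  simp only [dotProduct, mulVec, Matrix.of_apply]
  calc ∑ i, x i * ∑ j, (∫ τ in a..b, F τ i j) * x j
      = ∑ i, ∑ j, ∫ τ in a..b, x i * (F τ i j * x j) := by
        simp only [Finset.mul_sum, h1]
    _ = ∑ i, ∫ τ in a..b, ∑ j, x i * (F τ i j * x j) := by
        refine Finset.sum_congr rfl fun i _ => ?_
        rw [intervalIntegral.integral_finset_sum]
        intro j _
        exact (by fun_prop : Continuous fun τ => x i * (F τ i j * x j)).intervalIntegrable _ _
    _ = ∫ τ in a..b, ∑ i, ∑ j, x i * (F τ i j * x j) := by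
        rw [intervalIntegral.integral_finset_sum]
        intro i _
        apply Continuous.intervalIntegrable
        apply continuous_finset_sum
        intro j _; fun_prop
    _ = ∫ τ in a..b, ∑ i, x i * ∑ j, F τ i j * x j := by
        simp only [Finset.mul_sum]

/-- under persistent excitation of `Ψᵀ`, the exponentially weighted
information matrix `R(t) = e^{−αt}R(0) + ∫₀ᵗ e^{−α(t−τ)}Ψ(τ)ᵀΨ(τ)dτ` is positive
definite, bounded below by `e^{−αt}R(0)` on `[0,T]` and by `δe^{−2αT}·I` for `t ≥ T`. -/
theorem information_matrix_lower_bound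
    {n m : ℕ} (α T δ : ℝ) (hα : 0 < α) (hT : 0 < T) (hδ : 0 < δ)
    (Ψ : ℝ → Matrix (Fin n) (Fin m) ℝ) (hΨcont : Continuous Ψ)
    -- persistent excitation of Ψᵀ
    (hPE : ∀ t ≥ (0:ℝ),
      ((Matrix.of fun i j => ∫ τ in t..(t + T), ((Ψ τ)ᵀ * Ψ τ) i j)
        - δ • (1 : Matrix (Fin m) (Fin m) ℝ)).PosSemidef)
    (R0 : Matrix (Fin m) (Fin m) ℝ) (hR0 : R0.PosDef)
    (R : ℝ → Matrix (Fin m) (Fin m) ℝ)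
    (hR : ∀ t, R t = exp (-α * t) • R0 +
      Matrix.of (fun i j => ∫ τ in (0:ℝ)..t, exp (-α * (t - τ)) * ((Ψ τ)ᵀ * Ψ τ) i j)) :
    (∀ t ≥ (0:ℝ), (R t).PosDef)
    ∧ (∀ t ∈ Icc (0:ℝ) T, (R t - exp (-α * t) • R0).PosSemidef)
    ∧ (∀ t ≥ T, (R t - (δ * exp (-2 * α * T)) • (1 : Matrix (Fin m) (Fin m) ℝ)).PosSemidef) := by
  have hΨe : ∀ k i, Continuous fun τ => Ψ τ k i :=
    fun k i => (continuous_apply i).comp ((continuous_apply k).comp hΨcont)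
  set Q : ℝ → Matrix (Fin m) (Fin m) ℝ := fun τ => (Ψ τ)ᵀ * Ψ τ with hQ
  have hQc : ∀ i j, Continuous fun τ => Q τ i j := by
    intro i j
    simp only [hQ, Matrix.mul_apply, transpose_apply]
    exact continuous_finset_sum _ fun k _ => (hΨe k i).mul (hΨe k j)
  have hQpsd : ∀ τ, (Q τ).PosSemidef := by
    intro τ
    have := posSemidef_conjTranspose_mul_self (Ψ τ)
    simpa [Matrix.conjTranspose_eq_transpose_of_trivial, hQ] using this
  have hquadQ : ∀ τ (x : Fin m → ℝ), 0 ≤ x ⬝ᵥ (Q τ *ᵥ x) := by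
    intro τ x
    simpa [star_trivial] using (hQpsd τ).dotProduct_mulVec_nonneg x
  have hgc : ∀ (x : Fin m → ℝ), Continuous fun τ => x ⬝ᵥ (Q τ *ᵥ x) := by
    intro x
    simp only [dotProduct, mulVec]
    apply continuous_finset_sum; intro i _
    exact continuous_const.mul (continuous_finset_sum _ fun j _ => (hQc i j).mul continuous_const)
  -- quadratic form of the weighted integral matrix
  have hMquad : ∀ (t : ℝ) (x : Fin m → ℝ),
      x ⬝ᵥ ((Matrix.of fun i j => ∫ τ in (0:ℝ)..t, exp (-α * (t - τ)) * Q τ i j) *ᵥ x)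
        = ∫ τ in (0:ℝ)..t, exp (-α * (t - τ)) * (x ⬝ᵥ (Q τ *ᵥ x)) := by
    intro t x
    have := quad_int_aux (fun τ => exp (-α * (t - τ)) • Q τ)
      (fun i j => by
        simp only [Matrix.smul_apply, smul_eq_mul]
        exact (Real.continuous_exp.comp (by fun_prop)).mul (hQc i j)) 0 t x
    simp only [Matrix.smul_apply, smul_eq_mul] at this
    rw [this]
    refine intervalIntegral.integral_congr fun τ _ => ?_
    rw [smul_mulVec, dotProduct_smul, smul_eq_mul]
  -- quadratic form of the PE integral matrix
  have hPEquad : ∀ s ≥ (0:ℝ), ∀ (x : Fin m → ℝ),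
      δ * (x ⬝ᵥ x) ≤ ∫ τ in s..(s + T), x ⬝ᵥ (Q τ *ᵥ x) := by
    intro s hs x
    have h0 := (hPE s hs).dotProduct_mulVec_nonneg x
    rw [star_trivial, sub_mulVec, dotProduct_sub] at h0
    have h1 := quad_int_aux Q hQc s (s + T) x
    rw [h1] at h0
    have h2 : x ⬝ᵥ ((δ • (1 : Matrix (Fin m) (Fin m) ℝ)) *ᵥ x) = δ * (x ⬝ᵥ x) := by
      rw [smul_mulVec, dotProduct_smul, one_mulVec, smul_eq_mul]
    rw [h2] at h0
    linarith
  -- the weighted integral matrix is PSD-quadratic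
  have hMnn : ∀ t ≥ (0:ℝ), ∀ (x : Fin m → ℝ),
      0 ≤ ∫ τ in (0:ℝ)..t, exp (-α * (t - τ)) * (x ⬝ᵥ (Q τ *ᵥ x)) := by
    intro t ht x
    apply intervalIntegral.integral_nonneg ht
    intro u _
    exact mul_nonneg (exp_nonneg _) (hquadQ u x)
  have hQsymm : ∀ τ (i j : Fin m), Q τ j i = Q τ i j := by
    intro τ i j
    simp only [hQ, Matrix.mul_apply, transpose_apply]
    exact Finset.sum_congr rfl fun k _ => mul_comm _ _
  -- Hermitian-ness
  have hMherm : ∀ t, (Matrix.of fun i j =>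
      ∫ τ in (0:ℝ)..t, exp (-α * (t - τ)) * Q τ i j).IsHermitian := by
    intro t
    apply Matrix.IsHermitian.ext
    intro i j
    rw [star_trivial]
    simp only [Matrix.of_apply]
    exact intervalIntegral.integral_congr fun τ _ => by rw [hQsymm]
  have hRherm : ∀ t, (R t).IsHermitian := by
    intro t
    rw [hR t]
    refine Matrix.IsHermitian.add ?_ (hMherm t)
    apply Matrix.IsHermitian.ext
    intro i j
    rw [star_trivial]
    simp only [Matrix.smul_apply, smul_eq_mul]
    rw [show R0 j i = R0 i j from by rw [← hR0.1.apply i j, star_trivial]]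
  -- quadratic form of R t
  have hRquad : ∀ t (x : Fin m → ℝ),
      x ⬝ᵥ (R t *ᵥ x) = exp (-α * t) * (x ⬝ᵥ (R0 *ᵥ x))
        + ∫ τ in (0:ℝ)..t, exp (-α * (t - τ)) * (x ⬝ᵥ (Q τ *ᵥ x)) := by
    intro t x
    rw [hR t, add_mulVec, dotProduct_add, smul_mulVec, dotProduct_smul,
      smul_eq_mul, hMquad t x]
  have hR0q : ∀ (x : Fin m → ℝ), 0 ≤ x ⬝ᵥ (R0 *ᵥ x) := by
    intro x
    simpa [star_trivial] using hR0.posSemidef.dotProduct_mulVec_nonneg x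
  refine ⟨?_, ?_, ?_⟩
  · -- positive definiteness
    intro t ht
    refine posDef_iff_dotProduct_mulVec.mpr ⟨hRherm t, fun x hx => ?_⟩
    rw [star_trivial, hRquad t x]
    have h1 : 0 < x ⬝ᵥ (R0 *ᵥ x) := by
      simpa [star_trivial] using hR0.dotProduct_mulVec_pos hx
    have h2 := hMnn t ht x
    have := exp_pos (-α * t)
    nlinarith
  · -- lower bound on [0,T]
    intro t ht
    rw [hR t, add_sub_cancel_left]
    refine posSemidef_iff_dotProduct_mulVec.mpr ⟨hMherm t, fun x => ?_⟩
    rw [star_trivial, hMquad t x]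
    exact hMnn t ht.1 x
  · -- lower bound for t ≥ T
    intro t ht
    have hs : (0:ℝ) ≤ t - T := by linarith
    have ht0 : (0:ℝ) ≤ t := by linarith
    have hcherm : ((δ * exp (-2 * α * T)) • (1 : Matrix (Fin m) (Fin m) ℝ)).IsHermitian := by
      apply Matrix.IsHermitian.ext
      intro i j
      rw [star_trivial]
      simp only [Matrix.smul_apply, Matrix.one_apply, smul_eq_mul]
      by_cases h : i = j <;> simp [h, Ne.symm]
    refine posSemidef_iff_dotProduct_mulVec.mpr ⟨(hRherm t).sub hcherm, fun x => ?_⟩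
    rw [star_trivial, sub_mulVec, dotProduct_sub, smul_mulVec, dotProduct_smul,
      one_mulVec, smul_eq_mul, hRquad t x]
    -- split the integral
    have hint : ∀ a b : ℝ, IntervalIntegrable
        (fun τ => exp (-α * (t - τ)) * (x ⬝ᵥ (Q τ *ᵥ x))) MeasureTheory.volume a b := by
      intro a b
      exact ((Real.continuous_exp.comp (by fun_prop)).mul (hgc x)).intervalIntegrable a b
    have hsplit : (∫ τ in (0:ℝ)..t, exp (-α * (t - τ)) * (x ⬝ᵥ (Q τ *ᵥ x)))
        = (∫ τ in (0:ℝ)..(t - T), exp (-α * (t - τ)) * (x ⬝ᵥ (Q τ *ᵥ x)))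
          + ∫ τ in (t - T)..t, exp (-α * (t - τ)) * (x ⬝ᵥ (Q τ *ᵥ x)) := by
      rw [intervalIntegral.integral_add_adjacent_intervals (hint 0 (t - T)) (hint (t - T) t)]
    have h1 : 0 ≤ ∫ τ in (0:ℝ)..(t - T), exp (-α * (t - τ)) * (x ⬝ᵥ (Q τ *ᵥ x)) :=
      intervalIntegral.integral_nonneg hs fun u _ =>
        mul_nonneg (exp_nonneg _) (hquadQ u x)
    have h2 : exp (-α * T) * ∫ τ in (t - T)..t, x ⬝ᵥ (Q τ *ᵥ x)
        ≤ ∫ τ in (t - T)..t, exp (-α * (t - τ)) * (x ⬝ᵥ (Q τ *ᵥ x)) := by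
      rw [← intervalIntegral.integral_const_mul]
      apply intervalIntegral.integral_mono_on (by linarith)
        ((continuous_const.mul (hgc x)).intervalIntegrable _ _) (hint _ _)
      intro u hu
      apply mul_le_mul_of_nonneg_right _ (hquadQ u x)
      apply exp_le_exp.2
      nlinarith [hu.1, hu.2]
    have h3 : δ * (x ⬝ᵥ x) ≤ ∫ τ in (t - T)..t, x ⬝ᵥ (Q τ *ᵥ x) := by
      have := hPEquad (t - T) hs x
      rwa [show t - T + T = t from by ring] at this
    have hxx : 0 ≤ x ⬝ᵥ x := by
      simp only [dotProduct]
      exact Finset.sum_nonneg fun i _ => mul_self_nonneg _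
    have he1 : exp (-2 * α * T) ≤ exp (-α * T) := exp_le_exp.2 (by nlinarith)
    have he2 : 0 < exp (-α * T) := exp_pos _
    have hR0x := hR0q x
    have hexppos : (0:ℝ) < exp (-α * t) := exp_pos _
    rw [hsplit]
    have h4 : δ * exp (-2 * α * T) * (x ⬝ᵥ x) ≤ exp (-α * T) * (δ * (x ⬝ᵥ x)) := by
      calc δ * exp (-2 * α * T) * (x ⬝ᵥ x) = exp (-2 * α * T) * (δ * (x ⬝ᵥ x)) := by ring
        _ ≤ exp (-α * T) * (δ * (x ⬝ᵥ x)) :=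
            mul_le_mul_of_nonneg_right he1 (mul_nonneg hδ.le hxx)
    nlinarith [mul_le_mul_of_nonneg_left h3 he2.le, mul_nonneg hexppos.le hR0x]
end

section
/- Let M be an n×n symmetric positive-definite matrix, λ > 0, and let A : [0,∞) → ℝ^{n×n} be continuous with A(t)ᵀM + MA(t) ⪯ −λM for all t ≥ 0. Let d : [0,∞) → ℝ^n be continuous with Euclidean norm ‖d(t)‖ ≤ d̄ for all t, and let x : [0,∞) → ℝ^n be differentiable with ẋ(t) = A(t)x(t) + d(t) and x(0) = 0. Then for all t ≥ 0, ‖x(t)‖ ≤ (2/λ)·√(λ_max(M)/λ_min(M))·d̄, where λ_max(M) and λ_min(M) are the largest and smallest eigenvalues of M. -/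
open Matrix Real Set

/-- The Euclidean norm of a finite real vector. -/
noncomputable def euclidNorm {ι : Type*} [Fintype ι] (x : ι → ℝ) : ℝ :=
  Real.sqrt (x ⬝ᵥ x)

open Finset Filter Topology

lemma spectral_quad {n : ℕ} {M : Matrix (Fin n) (Fin n) ℝ} (hM : M.IsHermitian)
    (v : Fin n → ℝ) :
    v ⬝ᵥ M.mulVec v
      = ∑ i, hM.eigenvalues i * (hM.eigenvectorBasis.repr ((WithLp.equiv 2 _).symm v) i)^2
    ∧ v ⬝ᵥ v = ∑ i, (hM.eigenvectorBasis.repr ((WithLp.equiv 2 _).symm v) i)^2 := by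
  set b := hM.eigenvectorBasis with hb
  have inner_eq : ∀ a c : Fin n → ℝ,
      (inner ℝ ((WithLp.equiv 2 (Fin n → ℝ)).symm a) ((WithLp.equiv 2 (Fin n → ℝ)).symm c) : ℝ)
        = a ⬝ᵥ c := by
    intro a c
    simp [PiLp.inner_apply, dotProduct, mul_comm]
  set V : EuclideanSpace ℝ (Fin n) := (WithLp.equiv 2 _).symm v with hV
  set MV : EuclideanSpace ℝ (Fin n) := (WithLp.equiv 2 _).symm (M.mulVec v) with hMV
  have hrepr : ∀ w : EuclideanSpace ℝ (Fin n), ∀ i, b.repr w i = inner ℝ (b i) w :=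
    fun w i => b.repr_apply_apply w i
  have key : ∀ i, b.repr MV i = hM.eigenvalues i * b.repr V i := by
    intro i
    rw [hrepr, hrepr]
    have h1 : (inner ℝ (b i) MV : ℝ) = (⇑(b i)) ⬝ᵥ (M.mulVec v) := inner_eq _ _
    have h2 : (inner ℝ (b i) V : ℝ) = (⇑(b i)) ⬝ᵥ v := inner_eq _ _
    rw [h1, h2]
    have hsym : Mᵀ = M := by
      have := hM.eq
      rwa [Matrix.conjTranspose_eq_transpose_of_trivial] at this
    calc (⇑(b i)) ⬝ᵥ (M.mulVec v) = (Mᵀ.mulVec (⇑(b i))) ⬝ᵥ v := by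
          rw [Matrix.dotProduct_mulVec, ← Matrix.mulVec_transpose]
        _ = (M.mulVec (⇑(b i))) ⬝ᵥ v := by rw [hsym]
        _ = (hM.eigenvalues i • ⇑(b i)) ⬝ᵥ v := by rw [hM.mulVec_eigenvectorBasis]
        _ = hM.eigenvalues i * ((⇑(b i)) ⬝ᵥ v) := by rw [smul_dotProduct]; rw [smul_eq_mul]
  constructor
  · have : v ⬝ᵥ M.mulVec v = (inner ℝ V MV : ℝ) := (inner_eq v (M.mulVec v)).symm
    rw [this, ← b.repr.inner_map_map V MV]
    rw [PiLp.inner_apply]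
    refine Finset.sum_congr rfl fun i _ => ?_
    rw [key i]
    simp [sq]; ring
  · have : v ⬝ᵥ v = (inner ℝ V V : ℝ) := (inner_eq v v).symm
    rw [this, ← b.repr.inner_map_map V V, PiLp.inner_apply]
    refine Finset.sum_congr rfl fun i _ => ?_
    simp [sq]

lemma quad_le_iSup {n : ℕ} (hn : 0 < n) {M : Matrix (Fin n) (Fin n) ℝ} (hM : M.IsHermitian)
    (heq : ∀ v : Fin n → ℝ,
      v ⬝ᵥ M.mulVec v
        = ∑ i, hM.eigenvalues i * (hM.eigenvectorBasis.repr ((WithLp.equiv 2 _).symm v) i)^2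
      ∧ v ⬝ᵥ v = ∑ i, (hM.eigenvectorBasis.repr ((WithLp.equiv 2 _).symm v) i)^2)
    (v : Fin n → ℝ) :
    (⨅ i, hM.eigenvalues i) * (v ⬝ᵥ v) ≤ v ⬝ᵥ M.mulVec v ∧
      v ⬝ᵥ M.mulVec v ≤ (⨆ i, hM.eigenvalues i) * (v ⬝ᵥ v) := by
  have : Nonempty (Fin n) := ⟨⟨0, hn⟩⟩
  obtain ⟨h1, h2⟩ := heq v
  rw [h1, h2, Finset.mul_sum, Finset.mul_sum]
  constructor
  · refine Finset.sum_le_sum fun i _ => ?_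
    exact mul_le_mul_of_nonneg_right (ciInf_le (Finite.bddBelow_range _) i) (sq_nonneg _)
  · refine Finset.sum_le_sum fun i _ => ?_
    exact mul_le_mul_of_nonneg_right (le_ciSup (Finite.bddAbove_range _) i) (sq_nonneg _)

/-- Cauchy–Schwarz for a PSD quadratic form via discriminant. -/
lemma psd_cauchy_schwarz {n : ℕ} {M : Matrix (Fin n) (Fin n) ℝ} (hM : M.PosSemidef)
    (hsym : Mᵀ = M) (u v : Fin n → ℝ) :
    u ⬝ᵥ M.mulVec v ≤ Real.sqrt (u ⬝ᵥ M.mulVec u) * Real.sqrt (v ⬝ᵥ M.mulVec v) := by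
  have hnn : ∀ w : Fin n → ℝ, 0 ≤ w ⬝ᵥ M.mulVec w := by
    intro w
    have := hM.dotProduct_mulVec_nonneg w
    simpa using this
  have hsw : ∀ a c : Fin n → ℝ, a ⬝ᵥ M.mulVec c = c ⬝ᵥ M.mulVec a := by
    intro a c
    rw [Matrix.dotProduct_mulVec, ← Matrix.mulVec_transpose, hsym, dotProduct_comm]
  have hq : ∀ t : ℝ, 0 ≤ (v ⬝ᵥ M.mulVec v) * (t * t) + (2 * (u ⬝ᵥ M.mulVec v)) * t
      + (u ⬝ᵥ M.mulVec u) := by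
    intro t
    have := hnn (u + t • v)
    have hexp : (u + t • v) ⬝ᵥ M.mulVec (u + t • v)
        = (v ⬝ᵥ M.mulVec v) * (t * t) + (2 * (u ⬝ᵥ M.mulVec v)) * t + (u ⬝ᵥ M.mulVec u) := by
      rw [add_dotProduct, Matrix.mulVec_add, dotProduct_add,
        dotProduct_add, Matrix.mulVec_smul, dotProduct_smul,
        smul_dotProduct, smul_dotProduct, dotProduct_smul,
        hsw v u]
      simp [smul_eq_mul]; ring
    rw [hexp] at this
    exact this
  have hd := discrim_le_zero hq
  rw [discrim] at hd
  have hsq : (u ⬝ᵥ M.mulVec v)^2 ≤ (u ⬝ᵥ M.mulVec u) * (v ⬝ᵥ M.mulVec v) := by nlinarith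
  calc u ⬝ᵥ M.mulVec v ≤ |u ⬝ᵥ M.mulVec v| := le_abs_self _
    _ = Real.sqrt ((u ⬝ᵥ M.mulVec v)^2) := (Real.sqrt_sq_eq_abs _).symm
    _ ≤ Real.sqrt ((u ⬝ᵥ M.mulVec u) * (v ⬝ᵥ M.mulVec v)) := Real.sqrt_le_sqrt hsq
    _ = Real.sqrt (u ⬝ᵥ M.mulVec u) * Real.sqrt (v ⬝ᵥ M.mulVec v) :=
        Real.sqrt_mul (hnn u) _

lemma hasDerivAt_quadForm {n : ℕ} (M : Matrix (Fin n) (Fin n) ℝ)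
    {x : ℝ → Fin n → ℝ} {x' : Fin n → ℝ} {t : ℝ} (hx : HasDerivAt x x' t) :
    HasDerivAt (fun s => x s ⬝ᵥ M.mulVec (x s))
      (x' ⬝ᵥ M.mulVec (x t) + x t ⬝ᵥ M.mulVec x') t := by
  have hxi : ∀ i, HasDerivAt (fun s => x s i) (x' i) t := fun i => hasDerivAt_pi.1 hx i
  have : ∀ s, x s ⬝ᵥ M.mulVec (x s) = ∑ i, ∑ j, M i j * (x s i * x s j) := by
    intro s
    simp only [dotProduct, mulVec, Finset.mul_sum]
    refine Finset.sum_congr rfl fun i _ => Finset.sum_congr rfl fun j _ => ?_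
    ring
  simp only [this]
  have hD : HasDerivAt (fun s => ∑ i, ∑ j, M i j * (x s i * x s j))
      (∑ i, ∑ j, M i j * (x' i * x t j + x t i * x' j)) t := by
    refine HasDerivAt.fun_sum fun i _ => HasDerivAt.fun_sum fun j _ => ?_
    exact ((hxi i).mul (hxi j)).const_mul (M i j)
  convert hD using 1
  simp only [dotProduct, mulVec, Finset.mul_sum, mul_add, Finset.sum_add_distrib]
  congr 1
  · exact Finset.sum_congr rfl fun i _ => Finset.sum_congr rfl fun j _ => by ring
  · exact Finset.sum_congr rfl fun i _ => Finset.sum_congr rfl fun j _ => by ring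

lemma sqrt_bound_of_diff_ineq {V V' : ℝ → ℝ} {lam c : ℝ} (hlam : 0 < lam) (hc : 0 ≤ c)
    (hV : ∀ t ≥ (0:ℝ), HasDerivAt V (V' t) t) (hVnn : ∀ t ≥ (0:ℝ), 0 ≤ V t) (hV0 : V 0 = 0)
    (hV' : ∀ t ≥ (0:ℝ), V' t ≤ -lam * V t + 2 * c * Real.sqrt (V t)) :
    ∀ t ≥ (0:ℝ), Real.sqrt (V t) ≤ 2 * c / lam := by
  intro t ht
  refine le_of_forall_pos_le_add ?_
  intro ε hε
  set e := ε / 2 with he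
  have he0 : 0 < e := by positivity
  set f : ℝ → ℝ := fun s => Real.sqrt (V s + e ^ 2) with hf
  have hfpos : ∀ s ≥ (0:ℝ), 0 < V s + e ^ 2 := fun s hs => by
    have := hVnn s hs; positivity
  have hfval : ∀ s ≥ (0:ℝ), 0 < f s := fun s hs => Real.sqrt_pos.2 (hfpos s hs)
  set g : ℝ → ℝ := fun s => V' s / (2 * f s) with hg
  have hfd : ∀ s ≥ (0:ℝ), HasDerivAt f (g s) s := by
    intro s hs
    have h1 : HasDerivAt (fun u => V u + e ^ 2) (V' s) s := (hV s hs).add_const _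
    exact h1.sqrt (ne_of_gt (hfpos s hs))
  set K : ℝ := -(lam / 2) with hK
  set εp : ℝ := c + lam * e / 2 with hεp
  have main := le_gronwallBound_of_liminf_deriv_right_le (f := f) (f' := g)
    (δ := e) (K := K) (ε := εp) (a := 0) (b := t)
    (fun s hs => ((hfd s hs.1).continuousAt).continuousWithinAt)
    (fun s hs r hr => by
      have hd := (hfd s hs.1).hasDerivWithinAt (s := Set.Ioi s)
      rw [hasDerivWithinAt_iff_tendsto_slope' (notMem_Ioi.2 le_rfl)] at hd
      have hev : ∀ᶠ z in 𝓝[>] s, slope f s z < r :=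
        hd.eventually (Filter.Tendsto.eventually_lt_const hr tendsto_id) |>.mono (fun z hz => hz)
      refine (hev.mono fun z hz => ?_).frequently
      rwa [slope_def_field, div_eq_inv_mul] at hz)
    (by
      have : f 0 = e := by simp [hf, hV0, Real.sqrt_sq he0.le]
      exact le_of_eq this)
    (fun s hs => by
      have hs0 : (0:ℝ) ≤ s := hs.1
      have h2f : 0 < 2 * f s := by linarith [hfval s hs0]
      rw [hg, div_le_iff₀ h2f, hK, hεp]
      have hsl : Real.sqrt (V s) ≤ f s := by
        apply Real.sqrt_le_sqrt; nlinarith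
      have hef : e ≤ f s := by
        rw [hf]
        have h2 : e = Real.sqrt (e ^ 2) := (Real.sqrt_sq he0.le).symm
        rw [h2]
        exact Real.sqrt_le_sqrt (by nlinarith [hVnn s hs0])
      have hfs2 : f s ^ 2 = V s + e ^ 2 := Real.sq_sqrt (hfpos s hs0).le
      have hb := hV' s hs0
      have hsVnn : 0 ≤ Real.sqrt (V s) := Real.sqrt_nonneg _
      nlinarith [hfval s hs0, mul_le_mul_of_nonneg_left hsl hc,
        mul_nonneg (mul_nonneg hlam.le he0.le) (sub_nonneg.2 hef)])
    t ⟨ht, le_rfl⟩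
  have hKne : K ≠ 0 := by rw [hK]; intro h; nlinarith
  rw [gronwallBound_of_K_ne_0 hKne] at main
  simp only [sub_zero] at main
  set E := Real.exp (K * t) with hE
  have hE1 : E ≤ 1 := by
    rw [hE]
    apply Real.exp_le_one_iff.2
    rw [hK]; nlinarith
  have hE0 : 0 < E := Real.exp_pos _
  have hlam' : lam ≠ 0 := ne_of_gt hlam
  have hq : εp / K = -(2 * c / lam + e) := by
    rw [hεp, hK, div_eq_iff hKne]
    field_simp
    ring
  have hdiv : εp / K * (E - 1) = (2 * c / lam + e) * (1 - E) := by
    rw [hq]; ring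
  have hfinal : f t ≤ 2 * c / lam + 2 * e := by
    rw [hdiv] at main
    have hcl : 0 ≤ 2 * c / lam := by positivity
    nlinarith [mul_nonneg hcl (sub_nonneg.2 hE1), mul_nonneg he0.le hE0.le,
      mul_nonneg he0.le (sub_nonneg.2 hE1)]
  have hVf : Real.sqrt (V t) ≤ f t := Real.sqrt_le_sqrt (by nlinarith)
  calc Real.sqrt (V t) ≤ f t := hVf
    _ ≤ 2 * c / lam + 2 * e := hfinal
    _ = 2 * c / lam + ε := by rw [he]; ring


/-- robustness of a contracting linear time-varying system to bounded
disturbances, cf. Lemma 1 of del Vecchio–Slotine as used in the paper: if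
`A(t)ᵀM + MA(t) ⪯ −λM` and `ẋ = A(t)x + d(t)` with `x(0) = 0` and `‖d(t)‖ ≤ d̄`, then
`‖x(t)‖ ≤ (2/λ)·√(λ_max(M)/λ_min(M))·d̄` for all `t ≥ 0`. -/
theorem perturbed_contracting_system_bound
    {n : ℕ} (M : Matrix (Fin n) (Fin n) ℝ) (hM : M.PosDef)
    (lam : ℝ) (hlam : 0 < lam)
    (A : ℝ → Matrix (Fin n) (Fin n) ℝ) (hAcont : Continuous A)
    (hcontr : ∀ t ≥ (0:ℝ), (-(lam • M) - ((A t)ᵀ * M + M * A t)).PosSemidef)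
    (dbar : ℝ) (d : ℝ → Fin n → ℝ) (hdcont : ContinuousOn d (Ici 0))
    (hdbd : ∀ t ≥ (0:ℝ), euclidNorm (d t) ≤ dbar)
    (x : ℝ → Fin n → ℝ)
    (hx : ∀ t ≥ (0:ℝ), HasDerivAt x ((A t).mulVec (x t) + d t) t)
    (hx0 : x 0 = 0) :
    ∀ t ≥ (0:ℝ), euclidNorm (x t) ≤
      (2 / lam) * Real.sqrt ((⨆ i, hM.1.eigenvalues i) / (⨅ i, hM.1.eigenvalues i)) * dbar := by
  have hdbar0 : 0 ≤ dbar := le_trans (Real.sqrt_nonneg _) (hdbd 0 le_rfl)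
  have hdp : ∀ v : Fin n → ℝ, 0 ≤ v ⬝ᵥ v :=
    fun v => Finset.sum_nonneg fun i _ => mul_self_nonneg _
  intro t ht
  rcases Nat.eq_zero_or_pos n with hn | hn
  · subst hn
    have h1 : euclidNorm (x t) = 0 := by
      simp [euclidNorm, dotProduct]
    rw [h1]
    have : 0 ≤ Real.sqrt ((⨆ i, hM.1.eigenvalues i) / (⨅ i, hM.1.eigenvalues i)) :=
      Real.sqrt_nonneg _
    positivity
  · have hne : Nonempty (Fin n) := ⟨⟨0, hn⟩⟩
    set lmin := ⨅ i, hM.1.eigenvalues i with hlmin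
    set lmax := ⨆ i, hM.1.eigenvalues i with hlmax
    have heigpos : ∀ i, 0 < hM.1.eigenvalues i := fun i => hM.eigenvalues_pos i
    have hlmin_pos : 0 < lmin := by
      obtain ⟨i0, hi0⟩ := exists_eq_ciInf_of_finite (f := hM.1.eigenvalues)
      rw [hlmin, ← hi0]; exact heigpos i0
    have hlmax_pos : 0 < lmax := by
      obtain ⟨i0, hi0⟩ := exists_eq_ciSup_of_finite (f := hM.1.eigenvalues)
      rw [hlmax, ← hi0]; exact heigpos i0
    have hquad := fun v => quad_le_iSup hn hM.1 (fun w => spectral_quad hM.1 w) v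
    have hVnn' : ∀ v : Fin n → ℝ, 0 ≤ v ⬝ᵥ M.mulVec v := fun v =>
      le_trans (mul_nonneg hlmin_pos.le (hdp v)) (hquad v).1
    have hsym : Mᵀ = M := by
      have := hM.1.eq
      rwa [Matrix.conjTranspose_eq_transpose_of_trivial] at this
    set V : ℝ → ℝ := fun s => x s ⬝ᵥ M.mulVec (x s) with hV
    set V' : ℝ → ℝ := fun s =>
      ((A s).mulVec (x s) + d s) ⬝ᵥ M.mulVec (x s)
        + x s ⬝ᵥ M.mulVec ((A s).mulVec (x s) + d s) with hV'
    have hVd : ∀ s ≥ (0:ℝ), HasDerivAt V (V' s) s := fun s hs =>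
      hasDerivAt_quadForm M (hx s hs)
    set c : ℝ := Real.sqrt lmax * dbar with hc
    have hc0 : 0 ≤ c := mul_nonneg (Real.sqrt_nonneg _) hdbar0
    have htrans : ∀ (B : Matrix (Fin n) (Fin n) ℝ) (u w : Fin n → ℝ),
        (B.mulVec u) ⬝ᵥ w = u ⬝ᵥ (Bᵀ.mulVec w) := by
      intro B u w
      rw [Matrix.dotProduct_mulVec, Matrix.vecMul_transpose, dotProduct_comm]
    have hV'le : ∀ s ≥ (0:ℝ), V' s ≤ -lam * V s + 2 * c * Real.sqrt (V s) := by
      intro s hs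
      have hPSD := (hcontr s hs).dotProduct_mulVec_nonneg (x s)
      have hPSD' : 0 ≤ x s ⬝ᵥ ((-(lam • M) - ((A s)ᵀ * M + M * A s)).mulVec (x s)) := by
        simpa using hPSD
      have hexp : x s ⬝ᵥ ((-(lam • M) - ((A s)ᵀ * M + M * A s)).mulVec (x s))
          = -lam * (x s ⬝ᵥ M.mulVec (x s))
            - (x s ⬝ᵥ ((A s)ᵀ * M).mulVec (x s) + x s ⬝ᵥ (M * A s).mulVec (x s)) := by
        rw [Matrix.sub_mulVec, dotProduct_sub, Matrix.neg_mulVec,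
          dotProduct_neg, Matrix.smul_mulVec, dotProduct_smul,
          Matrix.add_mulVec, dotProduct_add]
        simp [smul_eq_mul]
        try ring
      have hAx : ((A s).mulVec (x s)) ⬝ᵥ M.mulVec (x s)
          = x s ⬝ᵥ ((A s)ᵀ * M).mulVec (x s) := by
        rw [htrans, Matrix.mulVec_mulVec]
      have hMA : x s ⬝ᵥ M.mulVec ((A s).mulVec (x s))
          = x s ⬝ᵥ (M * A s).mulVec (x s) := by
        rw [Matrix.mulVec_mulVec]
      have hdsym : (d s) ⬝ᵥ M.mulVec (x s) = x s ⬝ᵥ M.mulVec (d s) := by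
        rw [Matrix.dotProduct_mulVec, ← Matrix.mulVec_transpose, hsym, dotProduct_comm]
      have hCS : x s ⬝ᵥ M.mulVec (d s)
          ≤ Real.sqrt (V s) * Real.sqrt (d s ⬝ᵥ M.mulVec (d s)) :=
        psd_cauchy_schwarz hM.posSemidef hsym (x s) (d s)
      have hdM : Real.sqrt (d s ⬝ᵥ M.mulVec (d s)) ≤ c := by
        have h1 : d s ⬝ᵥ M.mulVec (d s) ≤ lmax * (d s ⬝ᵥ d s) := (hquad (d s)).2
        have h2 : Real.sqrt (d s ⬝ᵥ M.mulVec (d s)) ≤ Real.sqrt (lmax * (d s ⬝ᵥ d s)) :=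
          Real.sqrt_le_sqrt h1
        rw [Real.sqrt_mul hlmax_pos.le] at h2
        refine le_trans h2 ?_
        rw [hc]
        exact mul_le_mul_of_nonneg_left (hdbd s hs) (Real.sqrt_nonneg _)
      have hxMd : x s ⬝ᵥ M.mulVec (d s) ≤ Real.sqrt (V s) * c :=
        le_trans hCS (mul_le_mul_of_nonneg_left hdM (Real.sqrt_nonneg _))
      have hVexp : V' s = (x s ⬝ᵥ ((A s)ᵀ * M).mulVec (x s) + x s ⬝ᵥ (M * A s).mulVec (x s))
          + 2 * (x s ⬝ᵥ M.mulVec (d s)) := by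
        rw [hV']
        simp only [add_dotProduct, Matrix.mulVec_add, dotProduct_add]
        rw [hAx, hMA, hdsym]
        ring
      rw [hVexp]
      have h3 : x s ⬝ᵥ ((A s)ᵀ * M).mulVec (x s) + x s ⬝ᵥ (M * A s).mulVec (x s)
          ≤ -lam * V s := by
        rw [hexp] at hPSD'
        rw [hV]
        linarith
      nlinarith [Real.sqrt_nonneg (V s)]
    have hV0 : V 0 = 0 := by
      rw [hV]; simp [hx0]
    have hmain := sqrt_bound_of_diff_ineq hlam hc0 hVd (fun s hs => hVnn' (x s)) hV0 hV'le t ht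
    -- final chain
    have hx2 : x t ⬝ᵥ x t ≤ V t / lmin := by
      rw [le_div_iff₀ hlmin_pos]
      have := (hquad (x t)).1
      rw [hV]
      linarith
    have h4 : euclidNorm (x t) ≤ Real.sqrt (V t) / Real.sqrt lmin := by
      rw [euclidNorm, ← Real.sqrt_div (hVnn' (x t)) lmin]
      exact Real.sqrt_le_sqrt hx2
    have h5 : Real.sqrt (V t) / Real.sqrt lmin ≤ (2 * c / lam) / Real.sqrt lmin := by
      gcongr
      all_goals first
        | exact Real.sqrt_pos.2 hlmin_pos |>.le
        | exact hmain
    have h6 : (2 * c / lam) / Real.sqrt lmin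
        = (2 / lam) * Real.sqrt (lmax / lmin) * dbar := by
      rw [Real.sqrt_div hlmax_pos.le, hc]
      have hsl : Real.sqrt lmin ≠ 0 := ne_of_gt (Real.sqrt_pos.2 hlmin_pos)
      field_simp
      try ring
    calc euclidNorm (x t) ≤ Real.sqrt (V t) / Real.sqrt lmin := h4
      _ ≤ (2 * c / lam) / Real.sqrt lmin := h5
      _ = (2 / lam) * Real.sqrt (lmax / lmin) * dbar := h6
end

section
/- In the Hodgkin–Huxley sodium current I_Na(v,m,h) = μ_Na·m³·h·(v−ν_Na) with μ_Na > 0, and sodium activation dynamics ṁ = f_m(v,m) := (−m + σ_m(v))/τ_m(v), where σ_m(v) = 1/(1+exp(−(v−ρ)/κ)) is a sigmoid with κ > 0 and τ_m is a bell-shaped time-constant function (so τ_m(v) > 0 for all v), the following holds: for every v < ν_Na and every h > 0, at the activation equilibrium m = σ_m(v) one has (−∂_m I_Na(v,m,h)) · (∂_v f_m(v,m)) > 0; that is, the sodium current introduces positive feedback to the membrane voltage at any admissible equilibrium with v < ν_Na. -/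
open Real Set

/-- Example 4 of the paper: the sodium current of the Hodgkin–Huxley
model introduces positive feedback to the membrane voltage: for `v < ν_Na`, `h > 0`, at
the activation equilibrium `m = σ_m(v)`, one has `(−∂_m I_Na)·(∂_v f_m) > 0`. -/
theorem sodium_current_positive_feedback
    (μNa νNa ρ κ ζ χ τlo τhi : ℝ)
    (hμNa : 0 < μNa) (hκ : 0 < κ) (hχ : χ ≠ 0) (hτlo : 0 < τlo) (hτle : τlo ≤ τhi)
    (σm τm : ℝ → ℝ)
    (hσm : ∀ x, σm x = 1 / (1 + exp (-(x - ρ) / κ)))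
    (hτm : ∀ x, τm x = τlo + (τhi - τlo) * exp (-(x - ζ) ^ 2 / χ ^ 2)) :
    ∀ v < νNa, ∀ h > (0:ℝ),
      0 < (-(deriv (fun m : ℝ => μNa * m ^ 3 * h * (v - νNa)) (σm v)))
            * deriv (fun v' : ℝ => (-(σm v) + σm v') / τm v') v := by
  intro v hv h hh
  -- positivity facts
  have hupos : ∀ x : ℝ, 0 < 1 + exp (-(x - ρ) / κ) := fun x => by positivity
  have hσpos : 0 < σm v := by
    rw [hσm]; positivity
  have hτpos : ∀ x : ℝ, 0 < τm x := fun x => by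
    rw [hτm]
    have : 0 < exp (-(x - ζ) ^ 2 / χ ^ 2) := exp_pos _
    nlinarith [exp_pos (-(x - ζ) ^ 2 / χ ^ 2)]
  -- derivative of σm
  have hσderiv : ∀ x : ℝ, HasDerivAt σm
      (exp (-(x - ρ) / κ) * (1 / κ) / (1 + exp (-(x - ρ) / κ)) ^ 2) x := by
    intro x
    have h1 : HasDerivAt (fun y : ℝ => -(y - ρ) / κ) (-1 / κ) x := by
      have := ((hasDerivAt_id x).sub_const ρ).neg.div_const κ
      simpa using this
    have h2 : HasDerivAt (fun y : ℝ => 1 + exp (-(y - ρ) / κ))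
        (exp (-(x - ρ) / κ) * (-1 / κ)) x := ((h1.exp).const_add 1)
    have h3 : HasDerivAt (fun y : ℝ => 1 / (1 + exp (-(y - ρ) / κ)))
        ((0 * (1 + exp (-(x - ρ) / κ)) - 1 * (exp (-(x - ρ) / κ) * (-1 / κ)))
          / (1 + exp (-(x - ρ) / κ)) ^ 2) x :=
      (hasDerivAt_const x (1:ℝ)).div h2 (ne_of_gt (hupos x))
    have heq : (fun y : ℝ => 1 / (1 + exp (-(y - ρ) / κ))) = σm := by
      funext y; rw [hσm]
    rw [heq] at h3
    convert h3 using 1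
    field_simp
    ring
  -- derivative of τm
  have hτderiv : ∀ x : ℝ, HasDerivAt τm
      ((τhi - τlo) * (exp (-(x - ζ) ^ 2 / χ ^ 2) * (-(2 * (x - ζ)) / χ ^ 2))) x := by
    intro x
    have h1 : HasDerivAt (fun y : ℝ => -(y - ζ) ^ 2 / χ ^ 2)
        (-(2 * (x - ζ)) / χ ^ 2) x := by
      have hp : HasDerivAt (fun y : ℝ => (y - ζ) ^ 2) (2 * (x - ζ)) x := by
        have := ((hasDerivAt_id x).sub_const ζ).fun_pow 2
        simpa [mul_comm] using this
      simpa using hp.neg.div_const (χ ^ 2)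
    have h2 := ((h1.exp).const_mul (τhi - τlo)).const_add τlo
    have heq : (fun y : ℝ => τlo + (τhi - τlo) * exp (-(y - ζ) ^ 2 / χ ^ 2)) = τm := by
      funext y; rw [hτm]
    rw [heq] at h2
    exact h2
  set σ' := exp (-(v - ρ) / κ) * (1 / κ) / (1 + exp (-(v - ρ) / κ)) ^ 2 with hσ'
  have hσ'pos : 0 < σ' := by
    rw [hσ']
    have := hupos v
    positivity
  set τ' := (τhi - τlo) * (exp (-(v - ζ) ^ 2 / χ ^ 2) * (-(2 * (v - ζ)) / χ ^ 2))
  -- first derivative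
  have hd1 : deriv (fun m : ℝ => μNa * m ^ 3 * h * (v - νNa)) (σm v)
      = μNa * (3 * (σm v) ^ 2) * h * (v - νNa) := by
    have : HasDerivAt (fun m : ℝ => μNa * m ^ 3 * h * (v - νNa))
        (μNa * (3 * (σm v) ^ 2) * h * (v - νNa)) (σm v) := by
      have hp : HasDerivAt (fun m : ℝ => m ^ 3) (3 * (σm v) ^ 2) (σm v) := by
        have := hasDerivAt_pow 3 (σm v)
        norm_num at this
        simpa [mul_comm] using this
      exact ((hp.const_mul μNa).mul_const h).mul_const (v - νNa)
    exact this.deriv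
  -- second derivative
  have hd2 : deriv (fun v' : ℝ => (-(σm v) + σm v') / τm v') v = σ' / τm v := by
    have hnum : HasDerivAt (fun v' : ℝ => -(σm v) + σm v') σ' v :=
      (hσderiv v).const_add _
    have hq : HasDerivAt (fun v' : ℝ => (-(σm v) + σm v') / τm v')
        ((σ' * τm v - (-(σm v) + σm v) * τ') / (τm v) ^ 2) v :=
      hnum.div (hτderiv v) (ne_of_gt (hτpos v))
    rw [hq.deriv]
    have h0 : -(σm v) + σm v = 0 := by ring
    rw [h0]
    have := hτpos v
    field_simp
    ring
  rw [hd1, hd2]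
  have h2 : 0 < σ' / τm v := div_pos hσ'pos (hτpos v)
  have key : -(μNa * (3 * σm v ^ 2) * h * (v - νNa)) * (σ' / τm v)
      = μNa * (3 * σm v ^ 2) * h * (νNa - v) * (σ' / τm v) := by ring
  rw [key]
  have hvp : 0 < νNa - v := by linarith
  have h3 : 0 < 3 * σm v ^ 2 := by positivity
  exact mul_pos (mul_pos (mul_pos (mul_pos hμNa h3) hh) hvp) h2
end
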